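/- Let k be a field, H a bialgebra over k with comultiplication Δ(h) = Σ h_{(1)} ⊗ h_{(2)} and counit ε, A a left H-module algebra (with action h ⊲ a satisfying h ⊲ (aa') = Σ (h_{(1)} ⊲ a)(h_{(2)} ⊲ a'), h ⊲ 1_A = ε(h)1_A, plus unitality and associativity of the action) and B a right H-module algebra (with action b ⊳ h satisfying (bb') ⊳ h = Σ (b ⊳ h_{(1)})(b' ⊳ h_{(2)}), 1_B ⊳ h = ε(h)1_B, plus unitality and associativity of the action). Then the bilinear multiplication on A ⊗ H ⊗ B defined by (a ⊗ h ⊗ b)(a' ⊗ h' ⊗ b') := Σ a(h_{(1)} ⊲ a') ⊗ h_{(2)}h'_{(1)} ⊗ (b ⊳ h'_{(2)})b' is associative with two-sided unit 1_A ⊗ 1_H ⊗ 1_B (the two-sided crossed product A # H # B is a unital associative algebra). -/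

import Mathlib

set_option synthInstance.maxHeartbeats 400000
set_option maxHeartbeats 1000000


open TensorProduct

variable (k : Type*) [Field k]

/-- The multiplication of the twisted (braided) tensor product `Q ⊗_ξ P`. -/
noncomputable def twistMul {P Q : Type*} [AddCommGroup P] [Module k P]
    [AddCommGroup Q] [Module k Q]
    (μQ : Q ⊗[k] Q →ₗ[k] Q) (μP : P ⊗[k] P →ₗ[k] P)
    (ξ : P ⊗[k] Q →ₗ[k] Q ⊗[k] P) :
    (Q ⊗[k] P) ⊗[k] (Q ⊗[k] P) →ₗ[k] Q ⊗[k] P :=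
  (μQ.rTensor P)
    ∘ₗ (TensorProduct.assoc k Q Q P).symm.toLinearMap
    ∘ₗ (LinearMap.lTensor Q
          ((μP.lTensor Q)
            ∘ₗ (TensorProduct.assoc k Q P P).toLinearMap
            ∘ₗ (ξ.rTensor P)
            ∘ₗ (TensorProduct.assoc k P Q P).symm.toLinearMap))
    ∘ₗ (TensorProduct.assoc k Q P (Q ⊗[k] P)).toLinearMap

variable (H : Type*) [Ring H] [Bialgebra k H]
variable (A : Type*) [Ring A] [Algebra k A]
variable (B : Type*) [Ring B] [Algebra k B]

/-- The twisting map `H ⊗ A → A ⊗ H`, `h ⊗ a ↦ Σ (h₍₁₎ ⊲ a) ⊗ h₍₂₎`, associated to a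
left action `λ : H ⊗ A → A`. -/
noncomputable def leftTwist (lam : H ⊗[k] A →ₗ[k] A) : H ⊗[k] A →ₗ[k] A ⊗[k] H :=
  (lam.rTensor H)
    ∘ₗ (TensorProduct.assoc k H A H).symm.toLinearMap
    ∘ₗ (LinearMap.lTensor H (TensorProduct.comm k H A).toLinearMap)
    ∘ₗ (TensorProduct.assoc k H H A).toLinearMap
    ∘ₗ ((Coalgebra.comul (R := k) (A := H)).rTensor A)

/-- The twisting map `B ⊗ H → H ⊗ B`, `b ⊗ h ↦ Σ h₍₁₎ ⊗ (b ⊳ h₍₂₎)`, associated to a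
right action `ρ : B ⊗ H → B`. -/
noncomputable def rightTwist (rho : B ⊗[k] H →ₗ[k] B) : B ⊗[k] H →ₗ[k] H ⊗[k] B :=
  (LinearMap.lTensor H (rho ∘ₗ (TensorProduct.comm k H B).toLinearMap))
    ∘ₗ (TensorProduct.assoc k H H B).toLinearMap
    ∘ₗ (TensorProduct.comm k B (H ⊗[k] H)).toLinearMap
    ∘ₗ (LinearMap.lTensor B (Coalgebra.comul (R := k) (A := H)))

/-- The multiplication `Σ h h'₍₁₎ ⊗ (b ⊳ h'₍₂₎) b'` on `H ⊗ B`. -/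
noncomputable def crossedMulHB (rho : B ⊗[k] H →ₗ[k] B) :
    (H ⊗[k] B) ⊗[k] (H ⊗[k] B) →ₗ[k] H ⊗[k] B :=
  twistMul k (LinearMap.mul' k H) (LinearMap.mul' k B) (rightTwist k H B rho)

/-- The twisting map `(H ⊗ B) ⊗ A → A ⊗ (H ⊗ B)`,
`(h ⊗ b) ⊗ a ↦ Σ (h₍₁₎ ⊲ a) ⊗ (h₍₂₎ ⊗ b)`. -/
noncomputable def bigTwist (lam : H ⊗[k] A →ₗ[k] A) :
    (H ⊗[k] B) ⊗[k] A →ₗ[k] A ⊗[k] (H ⊗[k] B) :=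
  (TensorProduct.assoc k A H B).toLinearMap
    ∘ₗ ((leftTwist k H A lam).rTensor B)
    ∘ₗ (TensorProduct.assoc k H A B).symm.toLinearMap
    ∘ₗ (LinearMap.lTensor H (TensorProduct.comm k B A).toLinearMap)
    ∘ₗ (TensorProduct.assoc k H B A).toLinearMap

/-- The two-sided crossed product multiplication on `A ⊗ H ⊗ B`:
`(a ⊗ h ⊗ b)(a' ⊗ h' ⊗ b') = Σ a (h₍₁₎ ⊲ a') ⊗ h₍₂₎ h'₍₁₎ ⊗ (b ⊳ h'₍₂₎) b'`. -/
noncomputable def twoSidedCrossedMul (lam : H ⊗[k] A →ₗ[k] A) (rho : B ⊗[k] H →ₗ[k] B) :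
    (A ⊗[k] (H ⊗[k] B)) ⊗[k] (A ⊗[k] (H ⊗[k] B)) →ₗ[k] A ⊗[k] (H ⊗[k] B) :=
  twistMul k (LinearMap.mul' k A) (crossedMulHB k H B rho) (bigTwist k H A B lam)

open Coalgebra

lemma twistMul_tmul {P Q : Type*} [AddCommGroup P] [Module k P]
    [AddCommGroup Q] [Module k Q]
    (μQ : Q ⊗[k] Q →ₗ[k] Q) (μP : P ⊗[k] P →ₗ[k] P)
    (ξ : P ⊗[k] Q →ₗ[k] Q ⊗[k] P) (q q' : Q) (p p' : P)
    {ι : Type*} (s : Finset ι) (f : ι → Q) (g : ι → P)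
    (hξ : ξ (p ⊗ₜ[k] q') = ∑ i ∈ s, f i ⊗ₜ[k] g i) :
    twistMul k μQ μP ξ ((q ⊗ₜ[k] p) ⊗ₜ[k] (q' ⊗ₜ[k] p'))
      = ∑ i ∈ s, μQ (q ⊗ₜ[k] f i) ⊗ₜ[k] μP (g i ⊗ₜ[k] p') := by
  simp only [twistMul, LinearMap.comp_apply, LinearEquiv.coe_coe, assoc_tmul,
    LinearMap.lTensor_tmul, assoc_symm_tmul, LinearMap.rTensor_tmul, hξ]
  simp only [TensorProduct.sum_tmul, TensorProduct.tmul_sum, map_sum, assoc_tmul,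
    LinearMap.lTensor_tmul, assoc_symm_tmul, LinearMap.rTensor_tmul]
lemma leftTwist_tmul (lam : H ⊗[k] A →ₗ[k] A) (h : H) (a : A) {ι : Type*} (r : Coalgebra.Repr k h ι) :
    leftTwist k H A lam (h ⊗ₜ[k] a)
      = ∑ i ∈ r.index, lam (r.left i ⊗ₜ[k] a) ⊗ₜ[k] r.right i := by
  simp only [leftTwist, LinearMap.comp_apply, LinearEquiv.coe_coe, LinearMap.rTensor_tmul,
    ← r.eq]
  simp only [TensorProduct.sum_tmul, map_sum, assoc_tmul, LinearMap.lTensor_tmul,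
    comm_tmul, assoc_symm_tmul, LinearMap.rTensor_tmul]
  simp [comm_tmul, assoc_symm_tmul]

lemma rightTwist_tmul (rho : B ⊗[k] H →ₗ[k] B) (b : B) (h : H) {ι : Type*} (r : Coalgebra.Repr k h ι) :
    rightTwist k H B rho (b ⊗ₜ[k] h)
      = ∑ i ∈ r.index, r.left i ⊗ₜ[k] rho (b ⊗ₜ[k] r.right i) := by
  simp only [rightTwist, LinearMap.comp_apply, LinearEquiv.coe_coe, LinearMap.lTensor_tmul,
    ← r.eq]
  simp only [TensorProduct.tmul_sum, TensorProduct.sum_tmul, map_sum, assoc_tmul,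
    LinearMap.lTensor_tmul, comm_tmul, LinearMap.comp_apply, LinearEquiv.coe_coe]

lemma crossedMulHB_tmul (rho : B ⊗[k] H →ₗ[k] B) (h h' : H) (b b' : B)
    {ι : Type*} (r' : Coalgebra.Repr k h' ι) :
    crossedMulHB k H B rho ((h ⊗ₜ[k] b) ⊗ₜ[k] (h' ⊗ₜ[k] b'))
      = ∑ j ∈ r'.index, (h * r'.left j) ⊗ₜ[k] (rho (b ⊗ₜ[k] r'.right j) * b') := by
  rw [crossedMulHB, twistMul_tmul k (s := r'.index) (f := fun j => r'.left j)
    (g := fun j => rho (b ⊗ₜ[k] r'.right j)) _ _ _ _ _ _ _ (rightTwist_tmul k H B rho b h' r')]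
  simp [LinearMap.mul'_apply]

lemma bigTwist_tmul (lam : H ⊗[k] A →ₗ[k] A) (h : H) (b : B) (a : A) {ι : Type*} (r : Coalgebra.Repr k h ι) :
    bigTwist k H A B lam ((h ⊗ₜ[k] b) ⊗ₜ[k] a)
      = ∑ i ∈ r.index, lam (r.left i ⊗ₜ[k] a) ⊗ₜ[k] (r.right i ⊗ₜ[k] b) := by
  simp only [bigTwist, LinearMap.comp_apply, LinearEquiv.coe_coe, assoc_tmul,
    LinearMap.lTensor_tmul, comm_tmul, assoc_symm_tmul, LinearMap.rTensor_tmul,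
    leftTwist_tmul k H A lam h a r]
  simp only [TensorProduct.sum_tmul, map_sum, LinearMap.rTensor_tmul, assoc_tmul]

lemma twoSided_tmul (lam : H ⊗[k] A →ₗ[k] A) (rho : B ⊗[k] H →ₗ[k] B)
    (a a' : A) (h h' : H) (b b' : B) {ι κ : Type*} (r : Coalgebra.Repr k h ι) (r' : Coalgebra.Repr k h' κ) :
    twoSidedCrossedMul k H A B lam rho ((a ⊗ₜ[k] (h ⊗ₜ[k] b)) ⊗ₜ[k] (a' ⊗ₜ[k] (h' ⊗ₜ[k] b')))
      = ∑ i ∈ r.index, ∑ j ∈ r'.index,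
          (a * lam (r.left i ⊗ₜ[k] a'))
            ⊗ₜ[k] ((r.right i * r'.left j) ⊗ₜ[k] (rho (b ⊗ₜ[k] r'.right j) * b')) := by
  rw [twoSidedCrossedMul, twistMul_tmul k (s := r.index) (f := fun i => lam (r.left i ⊗ₜ[k] a'))
    (g := fun i => r.right i ⊗ₜ[k] b) _ _ _ _ _ _ _ (bigTwist_tmul k H A B lam h b a' r)]
  refine Finset.sum_congr rfl fun i _ => ?_
  rw [LinearMap.mul'_apply, crossedMulHB_tmul k H B rho (r.right i) h' b b' r',
    TensorProduct.tmul_sum]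
/-- `Repr` of a product in a bialgebra. -/
noncomputable def reprMul {x y : H} {ι κ : Type*} (r : Coalgebra.Repr k x ι) (s : Coalgebra.Repr k y κ) :
    Coalgebra.Repr k (x * y) (ι × κ) where
  index := r.index ×ˢ s.index
  left := fun p => r.left p.1 * s.left p.2
  right := fun p => r.right p.1 * s.right p.2
  eq := by
    rw [Bialgebra.comul_mul, ← r.eq, ← s.eq, Finset.sum_mul_sum]
    rw [Finset.sum_product]
    simp [Algebra.TensorProduct.tmul_mul_tmul]

lemma lam_assoc_elt (lam : H ⊗[k] A →ₗ[k] A)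
    (hlamassoc : lam ∘ₗ ((LinearMap.mul' k H).rTensor A)
        ∘ₗ (TensorProduct.assoc k H H A).symm.toLinearMap
      = lam ∘ₗ (lam.lTensor H)) (g g' : H) (a : A) :
    lam ((g * g') ⊗ₜ[k] a) = lam (g ⊗ₜ[k] lam (g' ⊗ₜ[k] a)) := by
  have := LinearMap.congr_fun hlamassoc (g ⊗ₜ[k] (g' ⊗ₜ[k] a))
  simpa [LinearMap.mul'_apply] using this

lemma rho_assoc_elt (rho : B ⊗[k] H →ₗ[k] B)
    (hrhoassoc : rho ∘ₗ (rho.rTensor H)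
        ∘ₗ (TensorProduct.assoc k B H H).symm.toLinearMap
      = rho ∘ₗ ((LinearMap.mul' k H).lTensor B)) (b : B) (g g' : H) :
    rho (rho (b ⊗ₜ[k] g) ⊗ₜ[k] g') = rho (b ⊗ₜ[k] (g * g')) := by
  have := LinearMap.congr_fun hrhoassoc (b ⊗ₜ[k] (g ⊗ₜ[k] g'))
  simpa [LinearMap.mul'_apply] using this

lemma lam_mul_elt (lam : H ⊗[k] A →ₗ[k] A)
    (hlammul : lam ∘ₗ ((LinearMap.mul' k A).lTensor H)
      = (LinearMap.mul' k A)
        ∘ₗ (TensorProduct.map lam lam)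
        ∘ₗ (TensorProduct.tensorTensorTensorComm k H H A A).toLinearMap
        ∘ₗ ((Coalgebra.comul (R := k) (A := H)).rTensor (A ⊗[k] A)))
    (g : H) (a a' : A) {ι : Type*} (r : Coalgebra.Repr k g ι) :
    lam (g ⊗ₜ[k] (a * a'))
      = ∑ i ∈ r.index, lam (r.left i ⊗ₜ[k] a) * lam (r.right i ⊗ₜ[k] a') := by
  have := LinearMap.congr_fun hlammul (g ⊗ₜ[k] (a ⊗ₜ[k] a'))
  simp only [LinearMap.comp_apply, LinearMap.lTensor_tmul, LinearMap.mul'_apply,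
    LinearEquiv.coe_coe, LinearMap.rTensor_tmul, ← r.eq] at this
  simpa [TensorProduct.sum_tmul, map_sum, tensorTensorTensorComm_tmul,
    LinearMap.mul'_apply] using this

lemma rho_mul_elt (rho : B ⊗[k] H →ₗ[k] B)
    (hrhomul : rho ∘ₗ ((LinearMap.mul' k B).rTensor H)
      = (LinearMap.mul' k B)
        ∘ₗ (TensorProduct.map rho rho)
        ∘ₗ (TensorProduct.tensorTensorTensorComm k B B H H).toLinearMap
        ∘ₗ ((Coalgebra.comul (R := k) (A := H)).lTensor (B ⊗[k] B)))
    (b b' : B) (g : H) {ι : Type*} (r : Coalgebra.Repr k g ι) :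
    rho ((b * b') ⊗ₜ[k] g)
      = ∑ i ∈ r.index, rho (b ⊗ₜ[k] r.left i) * rho (b' ⊗ₜ[k] r.right i) := by
  have := LinearMap.congr_fun hrhomul ((b ⊗ₜ[k] b') ⊗ₜ[k] g)
  simp only [LinearMap.comp_apply, LinearMap.rTensor_tmul, LinearMap.mul'_apply,
    LinearEquiv.coe_coe, LinearMap.lTensor_tmul, ← r.eq] at this
  simpa [TensorProduct.tmul_sum, map_sum, tensorTensorTensorComm_tmul,
    LinearMap.mul'_apply] using this
/-- A one-term representation of `comul 1`. -/
noncomputable def oneRepr : Coalgebra.Repr k (1 : H) Unit where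
  index := Finset.univ
  left := fun _ => 1
  right := fun _ => 1
  eq := by simp [Bialgebra.comul_one, Algebra.TensorProduct.one_def]

lemma sum_counit_right_smul (h : H) {ι : Type*} (r : Coalgebra.Repr k h ι) :
    ∑ i ∈ r.index, Coalgebra.counit (R := k) (r.right i) • r.left i = h := by
  have := congrArg (TensorProduct.rid k H) (Coalgebra.sum_tmul_counit_eq (R := k) r)
  rw [map_sum] at this
  simp only [rid_tmul, one_smul] at this
  exact this

lemma sum_counit_left_smul (h : H) {ι : Type*} (r : Coalgebra.Repr k h ι) :
    ∑ i ∈ r.index, Coalgebra.counit (R := k) (r.left i) • r.right i = h := by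
  have := congrArg (TensorProduct.lid k H) (Coalgebra.sum_counit_tmul_eq (R := k) r)
  rw [map_sum] at this
  simp only [lid_tmul, one_smul] at this
  exact this

lemma twoSided_one_mul (lam : H ⊗[k] A →ₗ[k] A) (rho : B ⊗[k] H →ₗ[k] B)
    (hlam1 : ∀ a : A, lam ((1 : H) ⊗ₜ[k] a) = a)
    (hrhoone : ∀ h : H, rho ((1 : B) ⊗ₜ[k] h)
      = (Coalgebra.counit (R := k) (A := H) h) • (1 : B))
    (z : A ⊗[k] (H ⊗[k] B)) :
    twoSidedCrossedMul k H A B lam rho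
      (((1 : A) ⊗ₜ[k] ((1 : H) ⊗ₜ[k] (1 : B))) ⊗ₜ[k] z) = z := by
  induction z using TensorProduct.induction_on with
  | zero => simp
  | add x y hx hy => rw [TensorProduct.tmul_add, map_add, hx, hy]
  | tmul a' w =>
    induction w using TensorProduct.induction_on with
    | zero => simp
    | add x y hx hy =>
      rw [TensorProduct.tmul_add, TensorProduct.tmul_add, map_add, hx, hy]
    | tmul h' b' =>
      rw [twoSided_tmul k H A B lam rho 1 a' 1 h' 1 b' (oneRepr k H) (Coalgebra.Repr.arbitrary k h')]
      simp only [oneRepr, hlam1, hrhoone, one_mul, mul_one, smul_mul_assoc,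
        Finset.univ_unique, Finset.sum_singleton]
      rw [← TensorProduct.tmul_sum]
      congr 1
      simp only [← TensorProduct.smul_tmul]
      rw [← TensorProduct.sum_tmul, sum_counit_right_smul]


lemma twoSided_mul_one (lam : H ⊗[k] A →ₗ[k] A) (rho : B ⊗[k] H →ₗ[k] B)
    (hlamone : ∀ h : H, lam (h ⊗ₜ[k] (1 : A))
      = (Coalgebra.counit (R := k) (A := H) h) • (1 : A))
    (hrho1 : ∀ b : B, rho (b ⊗ₜ[k] (1 : H)) = b)
    (z : A ⊗[k] (H ⊗[k] B)) :
    twoSidedCrossedMul k H A B lam rho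
      (z ⊗ₜ[k] ((1 : A) ⊗ₜ[k] ((1 : H) ⊗ₜ[k] (1 : B)))) = z := by
  induction z using TensorProduct.induction_on with
  | zero => simp
  | add x y hx hy => rw [TensorProduct.add_tmul, map_add, hx, hy]
  | tmul a w =>
    induction w using TensorProduct.induction_on with
    | zero => simp
    | add x y hx hy =>
      rw [TensorProduct.tmul_add, TensorProduct.add_tmul, map_add, hx, hy]
    | tmul h b =>
      rw [twoSided_tmul k H A B lam rho a 1 h 1 b 1 (Coalgebra.Repr.arbitrary k h) (oneRepr k H)]
      simp only [oneRepr, hlamone, hrho1, one_mul, mul_one, Finset.univ_unique,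
        Finset.sum_singleton, mul_smul_comm]
      simp only [TensorProduct.smul_tmul, ← TensorProduct.tmul_smul]
      rw [← TensorProduct.tmul_sum]
      congr 1
      simp only [← TensorProduct.smul_tmul]
      rw [← TensorProduct.sum_tmul, sum_counit_left_smul]
lemma coassoc_step {X : Type*} [AddCommGroup X] [Module k X] {h : H}
    {ι : Type*} {κ Λ : ι → Type*} (r : Coalgebra.Repr k h ι)
    (c : ∀ i : r.ι, Coalgebra.Repr k (r.left i) (κ i))
    (d : ∀ i : r.ι, Coalgebra.Repr k (r.right i) (Λ i))
    (M : H ⊗[k] (H ⊗[k] H) →ₗ[k] X) :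
    ∑ i ∈ r.index, ∑ w ∈ (c i).index,
        M ((c i).left w ⊗ₜ[k] ((c i).right w ⊗ₜ[k] r.right i))
      = ∑ i ∈ r.index, ∑ p ∈ (d i).index,
          M (r.left i ⊗ₜ[k] ((d i).left p ⊗ₜ[k] (d i).right p)) := by
  have := congrArg M (Coalgebra.sum_tmul_tmul_eq r c d)
  simpa [map_sum] using this

noncomputable def M1 (lam : H ⊗[k] A →ₗ[k] A) (a a' u : A) (g : H) (β : B) :
    H ⊗[k] (H ⊗[k] H) →ₗ[k] A ⊗[k] (H ⊗[k] B) :=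
  (TensorProduct.map
      ((LinearMap.mulLeft k a) ∘ₗ (LinearMap.mul' k A) ∘ₗ
        (TensorProduct.map (lam ∘ₗ (TensorProduct.mk k H A).flip a')
          (lam ∘ₗ (TensorProduct.mk k H A).flip u)))
      (((TensorProduct.mk k H B).flip β) ∘ₗ LinearMap.mulRight k g))
    ∘ₗ (TensorProduct.assoc k H H H).symm.toLinearMap

@[simp] lemma M1_tmul (lam : H ⊗[k] A →ₗ[k] A) (a a' u : A) (g : H) (β : B) (v1 v2 v3 : H) :
    M1 k H A B lam a a' u g β (v1 ⊗ₜ[k] (v2 ⊗ₜ[k] v3))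
      = (a * (lam (v1 ⊗ₜ[k] a') * lam (v2 ⊗ₜ[k] u))) ⊗ₜ[k] ((v3 * g) ⊗ₜ[k] β) := by
  simp [M1, LinearMap.mul'_apply]

noncomputable def M2 (lam : H ⊗[k] A →ₗ[k] A) (rho : B ⊗[k] H →ₗ[k] B)
    (a x1 a'' : A) (x2 g1 g2 : H) (b : B) (zf : H) (γ : B) :
    H ⊗[k] (H ⊗[k] H) →ₗ[k] A ⊗[k] (H ⊗[k] B) :=
  TensorProduct.map
    (LinearMap.mulLeft k a ∘ₗ LinearMap.mulLeft k x1 ∘ₗ lam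
      ∘ₗ (TensorProduct.mk k H A x2) ∘ₗ lam ∘ₗ (TensorProduct.mk k H A).flip a'')
    (TensorProduct.map (LinearMap.mulLeft k g1 ∘ₗ LinearMap.mulRight k g2)
      (LinearMap.mulRight k γ ∘ₗ rho ∘ₗ (TensorProduct.mk k B H b) ∘ₗ LinearMap.mulRight k zf))

@[simp] lemma M2_tmul (lam : H ⊗[k] A →ₗ[k] A) (rho : B ⊗[k] H →ₗ[k] B)
    (a x1 a'' : A) (x2 g1 g2 : H) (b : B) (zf : H) (γ : B) (y1 y2 y3 : H) :
    M2 k H A B lam rho a x1 a'' x2 g1 g2 b zf γ (y1 ⊗ₜ[k] (y2 ⊗ₜ[k] y3))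
      = (a * (x1 * lam (x2 ⊗ₜ[k] lam (y1 ⊗ₜ[k] a''))))
          ⊗ₜ[k] ((g1 * (y2 * g2)) ⊗ₜ[k] (rho (b ⊗ₜ[k] (y3 * zf)) * γ)) := by
  simp [M2]

noncomputable def M3 (rho : B ⊗[k] H →ₗ[k] B) (α : A) (g1 g2 : H) (b : B) (yf : H)
    (b' b'' : B) : H ⊗[k] (H ⊗[k] H) →ₗ[k] A ⊗[k] (H ⊗[k] B) :=
  (TensorProduct.mk k A (H ⊗[k] B) α) ∘ₗ
    TensorProduct.map (LinearMap.mulLeft k g1 ∘ₗ LinearMap.mulLeft k g2)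
      ((LinearMap.mul' k B) ∘ₗ
        TensorProduct.map (rho ∘ₗ (TensorProduct.mk k B H b) ∘ₗ LinearMap.mulLeft k yf)
          (LinearMap.mulRight k b'' ∘ₗ rho ∘ₗ (TensorProduct.mk k B H b')))

@[simp] lemma M3_tmul (rho : B ⊗[k] H →ₗ[k] B) (α : A) (g1 g2 : H) (b : B) (yf : H)
    (b' b'' : B) (z1 z2 z3 : H) :
    M3 k H A B rho α g1 g2 b yf b' b'' (z1 ⊗ₜ[k] (z2 ⊗ₜ[k] z3))
      = α ⊗ₜ[k] ((g1 * (g2 * z1))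
          ⊗ₜ[k] (rho (b ⊗ₜ[k] (yf * z2)) * (rho (b' ⊗ₜ[k] z3) * b''))) := by
  simp [M3, LinearMap.mul'_apply]
lemma twoSided_assoc_elt (lam : H ⊗[k] A →ₗ[k] A) (rho : B ⊗[k] H →ₗ[k] B)
    (hlamassoc : lam ∘ₗ ((LinearMap.mul' k H).rTensor A)
        ∘ₗ (TensorProduct.assoc k H H A).symm.toLinearMap
      = lam ∘ₗ (lam.lTensor H))
    (hlammul : lam ∘ₗ ((LinearMap.mul' k A).lTensor H)
      = (LinearMap.mul' k A)
        ∘ₗ (TensorProduct.map lam lam)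
        ∘ₗ (TensorProduct.tensorTensorTensorComm k H H A A).toLinearMap
        ∘ₗ ((Coalgebra.comul (R := k) (A := H)).rTensor (A ⊗[k] A)))
    (hrhoassoc : rho ∘ₗ (rho.rTensor H)
        ∘ₗ (TensorProduct.assoc k B H H).symm.toLinearMap
      = rho ∘ₗ ((LinearMap.mul' k H).lTensor B))
    (hrhomul : rho ∘ₗ ((LinearMap.mul' k B).rTensor H)
      = (LinearMap.mul' k B)
        ∘ₗ (TensorProduct.map rho rho)
        ∘ₗ (TensorProduct.tensorTensorTensorComm k B B H H).toLinearMap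
        ∘ₗ ((Coalgebra.comul (R := k) (A := H)).lTensor (B ⊗[k] B)))
    (a a' a'' : A) (h h' h'' : H) (b b' b'' : B) :
    twoSidedCrossedMul k H A B lam rho
      ((twoSidedCrossedMul k H A B lam rho
          ((a ⊗ₜ[k] (h ⊗ₜ[k] b)) ⊗ₜ[k] (a' ⊗ₜ[k] (h' ⊗ₜ[k] b'))))
        ⊗ₜ[k] (a'' ⊗ₜ[k] (h'' ⊗ₜ[k] b'')))
    = twoSidedCrossedMul k H A B lam rho
      ((a ⊗ₜ[k] (h ⊗ₜ[k] b)) ⊗ₜ[k]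
        (twoSidedCrossedMul k H A B lam rho
          ((a' ⊗ₜ[k] (h' ⊗ₜ[k] b')) ⊗ₜ[k] (a'' ⊗ₜ[k] (h'' ⊗ₜ[k] b''))))) := by
  classical
  set r := Coalgebra.Repr.arbitrary k h with hr
  set r' := Coalgebra.Repr.arbitrary k h' with hr'
  set r'' := Coalgebra.Repr.arbitrary k h'' with hr''
  set c : ∀ i : r.ι, Coalgebra.Repr k (r.left i) (H × H) :=
    fun i => Coalgebra.Repr.arbitrary k (r.left i) with hc
  set d : ∀ i : r.ι, Coalgebra.Repr k (r.right i) (H × H) :=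
    fun i => Coalgebra.Repr.arbitrary k (r.right i) with hd
  set e1 : ∀ j : r'.ι, Coalgebra.Repr k (r'.left j) (H × H) :=
    fun j => Coalgebra.Repr.arbitrary k (r'.left j) with he1
  set e2 : ∀ j : r'.ι, Coalgebra.Repr k (r'.right j) (H × H) :=
    fun j => Coalgebra.Repr.arbitrary k (r'.right j) with he2
  set f1 : ∀ m : r''.ι, Coalgebra.Repr k (r''.left m) (H × H) :=
    fun m => Coalgebra.Repr.arbitrary k (r''.left m) with hf1
  set f2 : ∀ m : r''.ι, Coalgebra.Repr k (r''.right m) (H × H) :=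
    fun m => Coalgebra.Repr.arbitrary k (r''.right m) with hf2
  -- Left-hand side computation
  have hL : twoSidedCrossedMul k H A B lam rho
      ((twoSidedCrossedMul k H A B lam rho
          ((a ⊗ₜ[k] (h ⊗ₜ[k] b)) ⊗ₜ[k] (a' ⊗ₜ[k] (h' ⊗ₜ[k] b'))))
        ⊗ₜ[k] (a'' ⊗ₜ[k] (h'' ⊗ₜ[k] b'')))
      = ∑ i ∈ r.index, ∑ j ∈ r'.index, ∑ p ∈ (d i).index, ∑ q ∈ (e1 j).index,
          ∑ m ∈ r''.index, ∑ n ∈ (f2 m).index,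
          (a * (lam (r.left i ⊗ₜ[k] a')
              * lam ((d i).left p ⊗ₜ[k] lam ((e1 j).left q ⊗ₜ[k] a''))))
            ⊗ₜ[k] (((d i).right p * ((e1 j).right q * r''.left m))
              ⊗ₜ[k] (rho (b ⊗ₜ[k] (r'.right j * (f2 m).left n))
                * (rho (b' ⊗ₜ[k] (f2 m).right n) * b''))) := by
    rw [twoSided_tmul k H A B lam rho a a' h h' b b' r r']
    rw [TensorProduct.sum_tmul, map_sum]
    refine Finset.sum_congr rfl fun i _ => ?_
    rw [TensorProduct.sum_tmul, map_sum]
    refine Finset.sum_congr rfl fun j _ => ?_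
    rw [twoSided_tmul k H A B lam rho _ a'' _ h'' _ b'' (reprMul k H (d i) (e1 j)) r'']
    simp only [reprMul]
    rw [Finset.sum_product]
    refine Finset.sum_congr rfl fun p _ => Finset.sum_congr rfl fun q _ =>
      Finset.sum_congr rfl fun m _ => ?_
    rw [lam_assoc_elt k H A lam hlamassoc,
      rho_mul_elt k H B rho hrhomul _ _ _ (f2 m)]
    simp only [rho_assoc_elt k H B rho hrhoassoc, Finset.sum_mul,
      TensorProduct.tmul_sum, mul_assoc]
  -- Right-hand side computation
  have hR : twoSidedCrossedMul k H A B lam rho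
      ((a ⊗ₜ[k] (h ⊗ₜ[k] b)) ⊗ₜ[k]
        (twoSidedCrossedMul k H A B lam rho
          ((a' ⊗ₜ[k] (h' ⊗ₜ[k] b')) ⊗ₜ[k] (a'' ⊗ₜ[k] (h'' ⊗ₜ[k] b'')))))
      = ∑ j ∈ r'.index, ∑ m ∈ r''.index, ∑ i ∈ r.index, ∑ p ∈ (e2 j).index,
          ∑ q ∈ (f1 m).index, ∑ w ∈ (c i).index,
          (a * (lam ((c i).left w ⊗ₜ[k] a')
              * lam ((c i).right w ⊗ₜ[k] lam (r'.left j ⊗ₜ[k] a''))))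
            ⊗ₜ[k] ((r.right i * ((e2 j).left p * (f1 m).left q))
              ⊗ₜ[k] (rho (b ⊗ₜ[k] ((e2 j).right p * (f1 m).right q))
                * (rho (b' ⊗ₜ[k] r''.right m) * b''))) := by
    rw [twoSided_tmul k H A B lam rho a' a'' h' h'' b' b'' r' r'']
    rw [TensorProduct.tmul_sum, map_sum]
    refine Finset.sum_congr rfl fun j _ => ?_
    rw [TensorProduct.tmul_sum, map_sum]
    refine Finset.sum_congr rfl fun m _ => ?_
    rw [twoSided_tmul k H A B lam rho a _ h _ b _ r (reprMul k H (e2 j) (f1 m))]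
    refine Finset.sum_congr rfl fun i _ => ?_
    simp only [reprMul]
    rw [Finset.sum_product]
    refine Finset.sum_congr rfl fun p _ => Finset.sum_congr rfl fun q _ => ?_
    rw [lam_mul_elt k H A lam hlammul _ _ _ (c i)]
    simp only [Finset.mul_sum, TensorProduct.sum_tmul, mul_assoc]
  -- transform the left-hand side
  have hL2 : (∑ i ∈ r.index, ∑ j ∈ r'.index, ∑ p ∈ (d i).index, ∑ q ∈ (e1 j).index, ∑ m ∈ r''.index, ∑ n ∈ (f2 m).index, (a * (lam (r.left i ⊗ₜ[k] a') * lam ((d i).left p ⊗ₜ[k] lam ((e1 j).left q ⊗ₜ[k] a''))))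
            ⊗ₜ[k] (((d i).right p * ((e1 j).right q * r''.left m))
              ⊗ₜ[k] (rho (b ⊗ₜ[k] (r'.right j * (f2 m).left n)) * (rho (b' ⊗ₜ[k] (f2 m).right n) * b''))))
      = ∑ i ∈ r.index, ∑ w ∈ (c i).index, ∑ j ∈ r'.index, ∑ q ∈ (e1 j).index, ∑ m ∈ r''.index, ∑ n ∈ (f2 m).index, (a * (lam ((c i).left w ⊗ₜ[k] a') * lam ((c i).right w ⊗ₜ[k] lam ((e1 j).left q ⊗ₜ[k] a''))))
            ⊗ₜ[k] ((r.right i * ((e1 j).right q * r''.left m))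
              ⊗ₜ[k] (rho (b ⊗ₜ[k] (r'.right j * (f2 m).left n)) * (rho (b' ⊗ₜ[k] (f2 m).right n) * b''))) := by
    have swap : (∑ i ∈ r.index, ∑ j ∈ r'.index, ∑ p ∈ (d i).index, ∑ q ∈ (e1 j).index, ∑ m ∈ r''.index, ∑ n ∈ (f2 m).index, (a * (lam (r.left i ⊗ₜ[k] a') * lam ((d i).left p ⊗ₜ[k] lam ((e1 j).left q ⊗ₜ[k] a''))))
            ⊗ₜ[k] (((d i).right p * ((e1 j).right q * r''.left m))
              ⊗ₜ[k] (rho (b ⊗ₜ[k] (r'.right j * (f2 m).left n)) * (rho (b' ⊗ₜ[k] (f2 m).right n) * b'')))) = ∑ i ∈ r.index, ∑ p ∈ (d i).index, ∑ j ∈ r'.index, ∑ q ∈ (e1 j).index, ∑ m ∈ r''.index, ∑ n ∈ (f2 m).index, (a * (lam (r.left i ⊗ₜ[k] a') * lam ((d i).left p ⊗ₜ[k] lam ((e1 j).left q ⊗ₜ[k] a''))))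
            ⊗ₜ[k] (((d i).right p * ((e1 j).right q * r''.left m))
              ⊗ₜ[k] (rho (b ⊗ₜ[k] (r'.right j * (f2 m).left n)) * (rho (b' ⊗ₜ[k] (f2 m).right n) * b''))) :=
      Finset.sum_congr rfl fun i _ => Finset.sum_comm
    rw [swap]
    have ev1 : (∑ i ∈ r.index, ∑ p ∈ (d i).index, ∑ j ∈ r'.index, ∑ q ∈ (e1 j).index, ∑ m ∈ r''.index, ∑ n ∈ (f2 m).index, (a * (lam (r.left i ⊗ₜ[k] a') * lam ((d i).left p ⊗ₜ[k] lam ((e1 j).left q ⊗ₜ[k] a''))))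
            ⊗ₜ[k] (((d i).right p * ((e1 j).right q * r''.left m))
              ⊗ₜ[k] (rho (b ⊗ₜ[k] (r'.right j * (f2 m).left n)) * (rho (b' ⊗ₜ[k] (f2 m).right n) * b''))))
        = ∑ i ∈ r.index, ∑ p ∈ (d i).index,
            (∑ j ∈ r'.index, ∑ q ∈ (e1 j).index, ∑ m ∈ r''.index, ∑ n ∈ (f2 m).index,
        M1 k H A B lam a a' (lam ((e1 j).left q ⊗ₜ[k] a''))
          ((e1 j).right q * r''.left m)
          (rho (b ⊗ₜ[k] (r'.right j * (f2 m).left n))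
            * (rho (b' ⊗ₜ[k] (f2 m).right n) * b''))) (r.left i ⊗ₜ[k] ((d i).left p ⊗ₜ[k] (d i).right p)) := by
      refine Finset.sum_congr rfl fun i _ => Finset.sum_congr rfl fun p _ => ?_
      simp only [LinearMap.sum_apply, M1_tmul]
    have ev2 : (∑ i ∈ r.index, ∑ w ∈ (c i).index, ∑ j ∈ r'.index, ∑ q ∈ (e1 j).index, ∑ m ∈ r''.index, ∑ n ∈ (f2 m).index, (a * (lam ((c i).left w ⊗ₜ[k] a') * lam ((c i).right w ⊗ₜ[k] lam ((e1 j).left q ⊗ₜ[k] a''))))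
            ⊗ₜ[k] ((r.right i * ((e1 j).right q * r''.left m))
              ⊗ₜ[k] (rho (b ⊗ₜ[k] (r'.right j * (f2 m).left n)) * (rho (b' ⊗ₜ[k] (f2 m).right n) * b''))))
        = ∑ i ∈ r.index, ∑ w ∈ (c i).index,
            (∑ j ∈ r'.index, ∑ q ∈ (e1 j).index, ∑ m ∈ r''.index, ∑ n ∈ (f2 m).index,
        M1 k H A B lam a a' (lam ((e1 j).left q ⊗ₜ[k] a''))
          ((e1 j).right q * r''.left m)
          (rho (b ⊗ₜ[k] (r'.right j * (f2 m).left n))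
            * (rho (b' ⊗ₜ[k] (f2 m).right n) * b''))) ((c i).left w ⊗ₜ[k] ((c i).right w ⊗ₜ[k] r.right i)) := by
      refine Finset.sum_congr rfl fun i _ => Finset.sum_congr rfl fun w _ => ?_
      simp only [LinearMap.sum_apply, M1_tmul]
    rw [ev1, ev2, coassoc_step]
  have hL3 : (∑ i ∈ r.index, ∑ w ∈ (c i).index, ∑ j ∈ r'.index, ∑ q ∈ (e1 j).index, ∑ m ∈ r''.index, ∑ n ∈ (f2 m).index, (a * (lam ((c i).left w ⊗ₜ[k] a') * lam ((c i).right w ⊗ₜ[k] lam ((e1 j).left q ⊗ₜ[k] a''))))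
            ⊗ₜ[k] ((r.right i * ((e1 j).right q * r''.left m))
              ⊗ₜ[k] (rho (b ⊗ₜ[k] (r'.right j * (f2 m).left n)) * (rho (b' ⊗ₜ[k] (f2 m).right n) * b'')))) = ∑ i ∈ r.index, ∑ w ∈ (c i).index, ∑ j ∈ r'.index, ∑ q ∈ (e1 j).index, ∑ m ∈ r''.index, ∑ t ∈ (f1 m).index, (a * (lam ((c i).left w ⊗ₜ[k] a') * lam ((c i).right w ⊗ₜ[k] lam ((e1 j).left q ⊗ₜ[k] a''))))
            ⊗ₜ[k] ((r.right i * ((e1 j).right q * (f1 m).left t))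
              ⊗ₜ[k] (rho (b ⊗ₜ[k] (r'.right j * (f1 m).right t)) * (rho (b' ⊗ₜ[k] r''.right m) * b''))) := by
    refine Finset.sum_congr rfl fun i _ => Finset.sum_congr rfl fun w _ =>
      Finset.sum_congr rfl fun j _ => Finset.sum_congr rfl fun q _ => ?_
    have ev1 : (∑ m ∈ r''.index, ∑ n ∈ (f2 m).index, (a * (lam ((c i).left w ⊗ₜ[k] a') * lam ((c i).right w ⊗ₜ[k] lam ((e1 j).left q ⊗ₜ[k] a''))))
            ⊗ₜ[k] ((r.right i * ((e1 j).right q * r''.left m))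
              ⊗ₜ[k] (rho (b ⊗ₜ[k] (r'.right j * (f2 m).left n)) * (rho (b' ⊗ₜ[k] (f2 m).right n) * b''))))
        = ∑ m ∈ r''.index, ∑ n ∈ (f2 m).index,
            (M3 k H A B rho
          (a * (lam ((c i).left w ⊗ₜ[k] a')
            * lam ((c i).right w ⊗ₜ[k] lam ((e1 j).left q ⊗ₜ[k] a''))))
          (r.right i) ((e1 j).right q) b (r'.right j) b' b'') (r''.left m ⊗ₜ[k] ((f2 m).left n ⊗ₜ[k] (f2 m).right n)) := by
      refine Finset.sum_congr rfl fun m _ => Finset.sum_congr rfl fun n _ => ?_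
      simp only [M3_tmul]
    have ev2 : (∑ m ∈ r''.index, ∑ t ∈ (f1 m).index, (a * (lam ((c i).left w ⊗ₜ[k] a') * lam ((c i).right w ⊗ₜ[k] lam ((e1 j).left q ⊗ₜ[k] a''))))
            ⊗ₜ[k] ((r.right i * ((e1 j).right q * (f1 m).left t))
              ⊗ₜ[k] (rho (b ⊗ₜ[k] (r'.right j * (f1 m).right t)) * (rho (b' ⊗ₜ[k] r''.right m) * b''))))
        = ∑ m ∈ r''.index, ∑ t ∈ (f1 m).index,
            (M3 k H A B rho
          (a * (lam ((c i).left w ⊗ₜ[k] a')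
            * lam ((c i).right w ⊗ₜ[k] lam ((e1 j).left q ⊗ₜ[k] a''))))
          (r.right i) ((e1 j).right q) b (r'.right j) b' b'') ((f1 m).left t ⊗ₜ[k] ((f1 m).right t ⊗ₜ[k] r''.right m)) := by
      refine Finset.sum_congr rfl fun m _ => Finset.sum_congr rfl fun t _ => ?_
      simp only [M3_tmul]
    rw [ev1, ev2, coassoc_step]
  -- transform the right-hand side
  have hR2 : (∑ j ∈ r'.index, ∑ m ∈ r''.index, ∑ i ∈ r.index, ∑ p ∈ (e2 j).index, ∑ q ∈ (f1 m).index, ∑ w ∈ (c i).index, (a * (lam ((c i).left w ⊗ₜ[k] a') * lam ((c i).right w ⊗ₜ[k] lam (r'.left j ⊗ₜ[k] a''))))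
            ⊗ₜ[k] ((r.right i * ((e2 j).left p * (f1 m).left q))
              ⊗ₜ[k] (rho (b ⊗ₜ[k] ((e2 j).right p * (f1 m).right q)) * (rho (b' ⊗ₜ[k] r''.right m) * b'')))) = ∑ j ∈ r'.index, ∑ p ∈ (e2 j).index, ∑ m ∈ r''.index, ∑ i ∈ r.index, ∑ q ∈ (f1 m).index, ∑ w ∈ (c i).index, (a * (lam ((c i).left w ⊗ₜ[k] a') * lam ((c i).right w ⊗ₜ[k] lam (r'.left j ⊗ₜ[k] a''))))
            ⊗ₜ[k] ((r.right i * ((e2 j).left p * (f1 m).left q))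
              ⊗ₜ[k] (rho (b ⊗ₜ[k] ((e2 j).right p * (f1 m).right q)) * (rho (b' ⊗ₜ[k] r''.right m) * b''))) := by
    refine Finset.sum_congr rfl fun j _ => ?_
    have s2 : (∑ m ∈ r''.index, ∑ i ∈ r.index, ∑ p ∈ (e2 j).index, ∑ q ∈ (f1 m).index, ∑ w ∈ (c i).index, (a * (lam ((c i).left w ⊗ₜ[k] a') * lam ((c i).right w ⊗ₜ[k] lam (r'.left j ⊗ₜ[k] a''))))
            ⊗ₜ[k] ((r.right i * ((e2 j).left p * (f1 m).left q))
              ⊗ₜ[k] (rho (b ⊗ₜ[k] ((e2 j).right p * (f1 m).right q)) * (rho (b' ⊗ₜ[k] r''.right m) * b'')))) = ∑ m ∈ r''.index, ∑ p ∈ (e2 j).index, ∑ i ∈ r.index, ∑ q ∈ (f1 m).index, ∑ w ∈ (c i).index, (a * (lam ((c i).left w ⊗ₜ[k] a') * lam ((c i).right w ⊗ₜ[k] lam (r'.left j ⊗ₜ[k] a''))))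
            ⊗ₜ[k] ((r.right i * ((e2 j).left p * (f1 m).left q))
              ⊗ₜ[k] (rho (b ⊗ₜ[k] ((e2 j).right p * (f1 m).right q)) * (rho (b' ⊗ₜ[k] r''.right m) * b''))) :=
      Finset.sum_congr rfl fun m _ => Finset.sum_comm
    rw [s2]
    exact Finset.sum_comm
  have hR3 : (∑ j ∈ r'.index, ∑ p ∈ (e2 j).index, ∑ m ∈ r''.index, ∑ i ∈ r.index, ∑ q ∈ (f1 m).index, ∑ w ∈ (c i).index, (a * (lam ((c i).left w ⊗ₜ[k] a') * lam ((c i).right w ⊗ₜ[k] lam (r'.left j ⊗ₜ[k] a''))))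
            ⊗ₜ[k] ((r.right i * ((e2 j).left p * (f1 m).left q))
              ⊗ₜ[k] (rho (b ⊗ₜ[k] ((e2 j).right p * (f1 m).right q)) * (rho (b' ⊗ₜ[k] r''.right m) * b'')))) = ∑ j ∈ r'.index, ∑ q ∈ (e1 j).index, ∑ m ∈ r''.index, ∑ i ∈ r.index, ∑ u ∈ (f1 m).index, ∑ w ∈ (c i).index, (a * (lam ((c i).left w ⊗ₜ[k] a') * lam ((c i).right w ⊗ₜ[k] lam ((e1 j).left q ⊗ₜ[k] a''))))
            ⊗ₜ[k] ((r.right i * ((e1 j).right q * (f1 m).left u))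
              ⊗ₜ[k] (rho (b ⊗ₜ[k] (r'.right j * (f1 m).right u)) * (rho (b' ⊗ₜ[k] r''.right m) * b''))) := by
    have ev1 : (∑ j ∈ r'.index, ∑ p ∈ (e2 j).index, ∑ m ∈ r''.index, ∑ i ∈ r.index, ∑ q ∈ (f1 m).index, ∑ w ∈ (c i).index, (a * (lam ((c i).left w ⊗ₜ[k] a') * lam ((c i).right w ⊗ₜ[k] lam (r'.left j ⊗ₜ[k] a''))))
            ⊗ₜ[k] ((r.right i * ((e2 j).left p * (f1 m).left q))
              ⊗ₜ[k] (rho (b ⊗ₜ[k] ((e2 j).right p * (f1 m).right q)) * (rho (b' ⊗ₜ[k] r''.right m) * b''))))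
        = ∑ j ∈ r'.index, ∑ p ∈ (e2 j).index,
            (∑ m ∈ r''.index, ∑ i ∈ r.index, ∑ u ∈ (f1 m).index, ∑ w ∈ (c i).index,
        M2 k H A B lam rho a (lam ((c i).left w ⊗ₜ[k] a')) a'' ((c i).right w)
          (r.right i) ((f1 m).left u) b ((f1 m).right u)
          (rho (b' ⊗ₜ[k] r''.right m) * b'')) (r'.left j ⊗ₜ[k] ((e2 j).left p ⊗ₜ[k] (e2 j).right p)) := by
      refine Finset.sum_congr rfl fun j _ => Finset.sum_congr rfl fun p _ => ?_
      simp only [LinearMap.sum_apply, M2_tmul]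
    have ev2 : (∑ j ∈ r'.index, ∑ q ∈ (e1 j).index, ∑ m ∈ r''.index, ∑ i ∈ r.index, ∑ u ∈ (f1 m).index, ∑ w ∈ (c i).index, (a * (lam ((c i).left w ⊗ₜ[k] a') * lam ((c i).right w ⊗ₜ[k] lam ((e1 j).left q ⊗ₜ[k] a''))))
            ⊗ₜ[k] ((r.right i * ((e1 j).right q * (f1 m).left u))
              ⊗ₜ[k] (rho (b ⊗ₜ[k] (r'.right j * (f1 m).right u)) * (rho (b' ⊗ₜ[k] r''.right m) * b''))))
        = ∑ j ∈ r'.index, ∑ q ∈ (e1 j).index,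
            (∑ m ∈ r''.index, ∑ i ∈ r.index, ∑ u ∈ (f1 m).index, ∑ w ∈ (c i).index,
        M2 k H A B lam rho a (lam ((c i).left w ⊗ₜ[k] a')) a'' ((c i).right w)
          (r.right i) ((f1 m).left u) b ((f1 m).right u)
          (rho (b' ⊗ₜ[k] r''.right m) * b'')) ((e1 j).left q ⊗ₜ[k] ((e1 j).right q ⊗ₜ[k] r'.right j)) := by
      refine Finset.sum_congr rfl fun j _ => Finset.sum_congr rfl fun q _ => ?_
      simp only [LinearMap.sum_apply, M2_tmul]
    rw [ev1, ev2, coassoc_step]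
  -- reorder the sums
  have hR4 : (∑ j ∈ r'.index, ∑ q ∈ (e1 j).index, ∑ m ∈ r''.index, ∑ i ∈ r.index, ∑ u ∈ (f1 m).index, ∑ w ∈ (c i).index, (a * (lam ((c i).left w ⊗ₜ[k] a') * lam ((c i).right w ⊗ₜ[k] lam ((e1 j).left q ⊗ₜ[k] a''))))
            ⊗ₜ[k] ((r.right i * ((e1 j).right q * (f1 m).left u))
              ⊗ₜ[k] (rho (b ⊗ₜ[k] (r'.right j * (f1 m).right u)) * (rho (b' ⊗ₜ[k] r''.right m) * b'')))) = ∑ i ∈ r.index, ∑ w ∈ (c i).index, ∑ j ∈ r'.index, ∑ q ∈ (e1 j).index, ∑ m ∈ r''.index, ∑ t ∈ (f1 m).index, (a * (lam ((c i).left w ⊗ₜ[k] a') * lam ((c i).right w ⊗ₜ[k] lam ((e1 j).left q ⊗ₜ[k] a''))))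
            ⊗ₜ[k] ((r.right i * ((e1 j).right q * (f1 m).left t))
              ⊗ₜ[k] (rho (b ⊗ₜ[k] (r'.right j * (f1 m).right t)) * (rho (b' ⊗ₜ[k] r''.right m) * b''))) := by
    calc (∑ j ∈ r'.index, ∑ q ∈ (e1 j).index, ∑ m ∈ r''.index, ∑ i ∈ r.index, ∑ u ∈ (f1 m).index, ∑ w ∈ (c i).index, (a * (lam ((c i).left w ⊗ₜ[k] a') * lam ((c i).right w ⊗ₜ[k] lam ((e1 j).left q ⊗ₜ[k] a''))))
            ⊗ₜ[k] ((r.right i * ((e1 j).right q * (f1 m).left u))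
              ⊗ₜ[k] (rho (b ⊗ₜ[k] (r'.right j * (f1 m).right u)) * (rho (b' ⊗ₜ[k] r''.right m) * b''))))
        = ∑ j ∈ r'.index, ∑ q ∈ (e1 j).index, ∑ m ∈ r''.index, ∑ u ∈ (f1 m).index, ∑ i ∈ r.index, ∑ w ∈ (c i).index, (a * (lam ((c i).left w ⊗ₜ[k] a') * lam ((c i).right w ⊗ₜ[k] lam ((e1 j).left q ⊗ₜ[k] a''))))
            ⊗ₜ[k] ((r.right i * ((e1 j).right q * (f1 m).left u))
              ⊗ₜ[k] (rho (b ⊗ₜ[k] (r'.right j * (f1 m).right u)) * (rho (b' ⊗ₜ[k] r''.right m) * b''))) := by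
          refine Finset.sum_congr rfl fun j _ => Finset.sum_congr rfl fun q _ =>
            Finset.sum_congr rfl fun m _ => Finset.sum_comm
      _ = ∑ s2 ∈ r'.index.sigma (fun j => (e1 j).index), ∑ s3 ∈ r''.index.sigma (fun m => (f1 m).index), ∑ s1 ∈ r.index.sigma (fun i => (c i).index),
            (a * (lam ((c s1.1).left s1.2 ⊗ₜ[k] a') * lam ((c s1.1).right s1.2 ⊗ₜ[k] lam ((e1 s2.1).left s2.2 ⊗ₜ[k] a''))))
            ⊗ₜ[k] ((r.right s1.1 * ((e1 s2.1).right s2.2 * (f1 s3.1).left s3.2))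
              ⊗ₜ[k] (rho (b ⊗ₜ[k] (r'.right s2.1 * (f1 s3.1).right s3.2)) * (rho (b' ⊗ₜ[k] r''.right s3.1) * b''))) := by
          simp only [Finset.sum_sigma]
      _ = ∑ s2 ∈ r'.index.sigma (fun j => (e1 j).index), ∑ s1 ∈ r.index.sigma (fun i => (c i).index), ∑ s3 ∈ r''.index.sigma (fun m => (f1 m).index),
            (a * (lam ((c s1.1).left s1.2 ⊗ₜ[k] a') * lam ((c s1.1).right s1.2 ⊗ₜ[k] lam ((e1 s2.1).left s2.2 ⊗ₜ[k] a''))))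
            ⊗ₜ[k] ((r.right s1.1 * ((e1 s2.1).right s2.2 * (f1 s3.1).left s3.2))
              ⊗ₜ[k] (rho (b ⊗ₜ[k] (r'.right s2.1 * (f1 s3.1).right s3.2)) * (rho (b' ⊗ₜ[k] r''.right s3.1) * b''))) :=
          Finset.sum_congr rfl fun s2 _ => Finset.sum_comm
      _ = ∑ s1 ∈ r.index.sigma (fun i => (c i).index), ∑ s2 ∈ r'.index.sigma (fun j => (e1 j).index), ∑ s3 ∈ r''.index.sigma (fun m => (f1 m).index),
            (a * (lam ((c s1.1).left s1.2 ⊗ₜ[k] a') * lam ((c s1.1).right s1.2 ⊗ₜ[k] lam ((e1 s2.1).left s2.2 ⊗ₜ[k] a''))))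
            ⊗ₜ[k] ((r.right s1.1 * ((e1 s2.1).right s2.2 * (f1 s3.1).left s3.2))
              ⊗ₜ[k] (rho (b ⊗ₜ[k] (r'.right s2.1 * (f1 s3.1).right s3.2)) * (rho (b' ⊗ₜ[k] r''.right s3.1) * b''))) := Finset.sum_comm
      _ = ∑ i ∈ r.index, ∑ w ∈ (c i).index, ∑ j ∈ r'.index, ∑ q ∈ (e1 j).index, ∑ m ∈ r''.index, ∑ t ∈ (f1 m).index, (a * (lam ((c i).left w ⊗ₜ[k] a') * lam ((c i).right w ⊗ₜ[k] lam ((e1 j).left q ⊗ₜ[k] a''))))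
            ⊗ₜ[k] ((r.right i * ((e1 j).right q * (f1 m).left t))
              ⊗ₜ[k] (rho (b ⊗ₜ[k] (r'.right j * (f1 m).right t)) * (rho (b' ⊗ₜ[k] r''.right m) * b''))) := by
          simp only [Finset.sum_sigma]
  rw [hL, hL2, hL3, hR, hR2, hR3, hR4]
/-- If `A` is a left `H`-module algebra and `B` a right `H`-module algebra over a bialgebra
`H`, then the two-sided crossed product `A # H # B` is a unital associative algebra. -/
theorem two_sided_crossed_product_assoc_unital
    (lam : H ⊗[k] A →ₗ[k] A) (rho : B ⊗[k] H →ₗ[k] B)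
    (hlam1 : ∀ a : A, lam ((1 : H) ⊗ₜ[k] a) = a)
    (hlamassoc : lam ∘ₗ ((LinearMap.mul' k H).rTensor A)
        ∘ₗ (TensorProduct.assoc k H H A).symm.toLinearMap
      = lam ∘ₗ (lam.lTensor H))
    (hlammul : lam ∘ₗ ((LinearMap.mul' k A).lTensor H)
      = (LinearMap.mul' k A)
        ∘ₗ (TensorProduct.map lam lam)
        ∘ₗ (TensorProduct.tensorTensorTensorComm k H H A A).toLinearMap
        ∘ₗ ((Coalgebra.comul (R := k) (A := H)).rTensor (A ⊗[k] A)))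
    (hlamone : ∀ h : H, lam (h ⊗ₜ[k] (1 : A))
      = (Coalgebra.counit (R := k) (A := H) h) • (1 : A))
    (hrho1 : ∀ b : B, rho (b ⊗ₜ[k] (1 : H)) = b)
    (hrhoassoc : rho ∘ₗ (rho.rTensor H)
        ∘ₗ (TensorProduct.assoc k B H H).symm.toLinearMap
      = rho ∘ₗ ((LinearMap.mul' k H).lTensor B))
    (hrhomul : rho ∘ₗ ((LinearMap.mul' k B).rTensor H)
      = (LinearMap.mul' k B)
        ∘ₗ (TensorProduct.map rho rho)
        ∘ₗ (TensorProduct.tensorTensorTensorComm k B B H H).toLinearMap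
        ∘ₗ ((Coalgebra.comul (R := k) (A := H)).lTensor (B ⊗[k] B)))
    (hrhoone : ∀ h : H, rho ((1 : B) ⊗ₜ[k] h)
      = (Coalgebra.counit (R := k) (A := H) h) • (1 : B)) :
    (twoSidedCrossedMul k H A B lam rho
        ∘ₗ (twoSidedCrossedMul k H A B lam rho).rTensor (A ⊗[k] (H ⊗[k] B))
      = twoSidedCrossedMul k H A B lam rho
        ∘ₗ (twoSidedCrossedMul k H A B lam rho).lTensor (A ⊗[k] (H ⊗[k] B))
        ∘ₗ (TensorProduct.assoc k (A ⊗[k] (H ⊗[k] B)) (A ⊗[k] (H ⊗[k] B))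
              (A ⊗[k] (H ⊗[k] B))).toLinearMap)
    ∧ (∀ z : A ⊗[k] (H ⊗[k] B),
        twoSidedCrossedMul k H A B lam rho
          (((1 : A) ⊗ₜ[k] ((1 : H) ⊗ₜ[k] (1 : B))) ⊗ₜ[k] z) = z)
    ∧ (∀ z : A ⊗[k] (H ⊗[k] B),
        twoSidedCrossedMul k H A B lam rho
          (z ⊗ₜ[k] ((1 : A) ⊗ₜ[k] ((1 : H) ⊗ₜ[k] (1 : B)))) = z) := by
  refine ⟨?_, fun z => twoSided_one_mul k H A B lam rho hlam1 hrhoone z,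
    fun z => twoSided_mul_one k H A B lam rho hlamone hrho1 z⟩
  ext a h b a' h' b' a'' h'' b''
  simp only [TensorProduct.AlgebraTensorModule.curry_apply, LinearMap.coe_restrictScalars,
    TensorProduct.curry_apply, LinearMap.comp_apply, LinearEquiv.coe_coe,
    LinearMap.rTensor_tmul, LinearMap.lTensor_tmul, assoc_tmul]
  exact twoSided_assoc_elt k H A B lam rho hlamassoc hlammul hrhoassoc hrhomul
    a a' a'' h h' h'' b b' b''
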